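/- Let ξ ⪯ ζ be probability measures on ℕ with finite means, and let k ∈ ℕ. Then the mean of ξ ⋄_k ζ satisfies E(ξ ⋄_k ζ) ≤ E(ξ) + E(ζ · 1_{[k,∞)}), i.e., the mean of ξ ⋄_k ζ is bounded by the mean of ξ plus the contribution of ζ above k. In particular, if ε := ζ([k,∞)) and ζ is supported in [0,B] then E(ξ ⋄_k ζ) ≤ E(ξ) + εB. -/

import Mathlib

open MeasureTheory
open scoped ENNReal NNReal

/-- Stochastic dominance: `ξ ⪯ ζ` iff `ξ([0,n]) ≥ ζ([0,n])` for all `n`. -/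
def StochDom (ξ ζ : Measure ℕ) : Prop := ∀ n : ℕ, ζ (Set.Iic n) ≤ ξ (Set.Iic n)

/-- Partial dominance `ξ ⪯_l ζ` : `ξ([0,n]) ≥ ζ([0,n])` for all `n ≤ l`. -/
def StochDomUpTo (l : ℕ) (ξ ζ : Measure ℕ) : Prop :=
  ∀ n ≤ l, ζ (Set.Iic n) ≤ ξ (Set.Iic n)

/-- `η` is the measure `ξ ⋄_k ζ`: it is a probability measure dominated by `ζ`, agreeing
with `ξ` on `[0,k-1]`, and for some `K ≥ k` its tails above `K` agree with those of `ζ`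
while it vanishes on `{k,...,K-1}`. -/
def IsDiamond (ξ ζ : Measure ℕ) (k : ℕ) (η : Measure ℕ) : Prop :=
  IsProbabilityMeasure η ∧ StochDom η ζ ∧
  (∀ n < k, η (Set.Iic n) = ξ (Set.Iic n)) ∧
  ∃ K ≥ k, (∀ n > K, η (Set.Ici n) = ζ (Set.Ici n)) ∧ η (Set.Ico k K) = 0


/-- The mean of a measure on ℕ : `E(μ) = ∑ n, n·μ({n})`. -/
noncomputable def meanN (μ : Measure ℕ) : ℝ≥0∞ := ∑' n : ℕ, (n : ℝ≥0∞) * μ {n}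

lemma meas_eq_tsum (μ : Measure ℕ) (s : Set ℕ) :
    μ s = ∑' n, s.indicator (fun n => μ {n}) n := by
  rw [← tsum_subtype]
  conv_lhs => rw [show s = ⋃ n ∈ s, {n} from (Set.biUnion_of_singleton s).symm]
  rw [measure_biUnion s.to_countable (fun a _ b _ hab => by
    simp [Function.onFun, Set.disjoint_singleton_left, hab]) (fun n _ => measurableSet_singleton n)]

lemma tsum_ite_lt (m : ℕ) (c : ℝ≥0∞) : ∑' i : ℕ, (if i < m then c else 0) = m * c := by
  rw [tsum_eq_sum (s := Finset.range m) (fun i hi => by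
    rw [if_neg (by simpa using hi)])]
  rw [Finset.sum_congr rfl (fun i hi => if_pos (Finset.mem_range.mp hi))]
  simp [Finset.sum_const, nsmul_eq_mul]

lemma meanN_eq_tail (μ : Measure ℕ) : meanN μ = ∑' i : ℕ, μ (Set.Ioi i) := by
  have h2 : ∀ i : ℕ, μ (Set.Ioi i) = ∑' n : ℕ, (if i < n then μ {n} else 0) := by
    intro i
    rw [meas_eq_tsum]
    congr 1; ext n; simp [Set.indicator, Set.mem_Ioi]
  simp_rw [meanN, fun n => (tsum_ite_lt n (μ {n})).symm, h2]
  exact ENNReal.tsum_comm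

lemma prob_Ioi (μ : Measure ℕ) [IsProbabilityMeasure μ] (i : ℕ) :
    μ (Set.Ioi i) = 1 - μ (Set.Iic i) := by
  rw [← Set.compl_Iic, measure_compl measurableSet_Iic (measure_ne_top μ _), measure_univ]

/-- `E(ξ ⋄_k ζ) ≤ E(ξ) + E(ζ·1_{[k,∞)})`; in particular if `ζ([k,∞)) = ε` and `ζ` is
supported in `[0,B]` then `E(ξ ⋄_k ζ) ≤ E(ξ) + ε·B`. -/
theorem diamond_mean_bound (ξ ζ η : Measure ℕ) [IsProbabilityMeasure ξ]
    [IsProbabilityMeasure ζ] (hξζ : StochDom ξ ζ) (k : ℕ)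
    (hmξ : meanN ξ < ⊤) (hmζ : meanN ζ < ⊤)
    (hη : IsDiamond ξ ζ k η) :
    meanN η ≤ meanN ξ + ∑' n : ℕ, Set.indicator (Set.Ici k) (fun n : ℕ => (n : ℝ≥0∞) * ζ {n}) n
    ∧ ∀ B : ℕ, ζ (Set.Ioi B) = 0 →
        meanN η ≤ meanN ξ + ζ (Set.Ici k) * B := by
  obtain ⟨hprob, hdom, hagree, -⟩ := hη
  haveI := hprob
  -- tail sum above k of ζ is bounded by the indicator sum
  have hT : ∑' i : ℕ, ζ (Set.Ioi (i + k)) ≤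
      ∑' n : ℕ, Set.indicator (Set.Ici k) (fun n : ℕ => (n : ℝ≥0∞) * ζ {n}) n := by
    have h2 : ∀ i : ℕ, ζ (Set.Ioi (i + k)) = ∑' n : ℕ, (if i < n - k then ζ {n} else 0) := by
      intro i
      rw [meas_eq_tsum]
      congr 1; ext n
      simp only [Set.indicator, Set.mem_Ioi]
      by_cases h : i + k < n
      · rw [if_pos h, if_pos (by omega)]
      · rw [if_neg h, if_neg (by omega)]
    calc ∑' i : ℕ, ζ (Set.Ioi (i + k))
        = ∑' n : ℕ, ((n - k : ℕ) : ℝ≥0∞) * ζ {n} := by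
          simp_rw [h2]
          rw [ENNReal.tsum_comm]
          simp_rw [tsum_ite_lt]
      _ ≤ _ := by
          refine ENNReal.tsum_le_tsum fun n => ?_
          by_cases hn : k ≤ n
          · rw [Set.indicator_of_mem (Set.mem_Ici.mpr hn)]
            exact mul_le_mul_left (by exact_mod_cast Nat.sub_le n k) _
          · have : n - k = 0 := by omega
            simp [this]
  have key : meanN η ≤ meanN ξ +
      ∑' n : ℕ, Set.indicator (Set.Ici k) (fun n : ℕ => (n : ℝ≥0∞) * ζ {n}) n := by
    have hsplit : meanN η = ∑ i ∈ Finset.range k, η (Set.Ioi i) + ∑' i : ℕ, η (Set.Ioi (i + k)) := by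
      rw [meanN_eq_tail]
      exact (Summable.sum_add_tsum_nat_add' (f := fun i => η (Set.Ioi i)) (k := k) ENNReal.summable).symm
    rw [hsplit]
    have h1 : ∑ i ∈ Finset.range k, η (Set.Ioi i) ≤ meanN ξ := by
      rw [meanN_eq_tail]
      calc ∑ i ∈ Finset.range k, η (Set.Ioi i)
          = ∑ i ∈ Finset.range k, ξ (Set.Ioi i) := by
            refine Finset.sum_congr rfl fun i hi => ?_
            rw [prob_Ioi, prob_Ioi, hagree i (Finset.mem_range.mp hi)]
        _ ≤ _ := ENNReal.sum_le_tsum _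
    have h2 : ∑' i : ℕ, η (Set.Ioi (i + k)) ≤ ∑' i : ℕ, ζ (Set.Ioi (i + k)) := by
      refine ENNReal.tsum_le_tsum fun i => ?_
      rw [prob_Ioi, prob_Ioi]
      exact tsub_le_tsub_left (hdom _) 1
    exact add_le_add h1 (h2.trans hT)
  refine ⟨key, fun B hB => key.trans (add_le_add_right ?_ _)⟩
  calc ∑' n : ℕ, Set.indicator (Set.Ici k) (fun n : ℕ => (n : ℝ≥0∞) * ζ {n}) n
      ≤ ∑' n : ℕ, Set.indicator (Set.Ici k) (fun n : ℕ => ζ {n}) n * B := by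
        refine ENNReal.tsum_le_tsum fun n => ?_
        by_cases hn : k ≤ n
        · rw [Set.indicator_of_mem (Set.mem_Ici.mpr hn), Set.indicator_of_mem (Set.mem_Ici.mpr hn)]
          by_cases hnB : n ≤ B
          · rw [mul_comm]
            exact mul_le_mul_right (by exact_mod_cast hnB) _
          · have : ζ {n} = 0 :=
              measure_mono_null (Set.singleton_subset_iff.mpr (by simpa using hnB)) hB
            simp [this]
        · rw [Set.indicator_of_notMem (by simpa using hn), Set.indicator_of_notMem (by simpa using hn)]
          simp
    _ = ζ (Set.Ici k) * B := by rw [ENNReal.tsum_mul_right, ← meas_eq_tsum]
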